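/- For any r-differential poset P, the rank sizes weakly increase: p_n ≤ p_{n+1} for all n ≥ 0. -/

import Mathlib

open Classical in
/-- The up operator `U_n : ℚP_n → ℚP_{n+1}` of a graded poset with rank function `rank`,
sending each basis element `x ∈ P_n` to the sum of the elements covering it. -/
noncomputable def upMap {P : Type*} [PartialOrder P] (rank : P → ℕ)
    [∀ m : ℕ, Fintype {x : P // rank x = m}] (n : ℕ) :
    ({x : P // rank x = n} → ℚ) →ₗ[ℚ] ({x : P // rank x = n + 1} → ℚ) :=
  Matrix.mulVecLin (fun (y : {x : P // rank x = n + 1}) (x : {x : P // rank x = n}) =>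
    if (x : P) ⋖ (y : P) then 1 else 0)

open Classical in
/-- The down operator `D_n : ℚP_n → ℚP_{n-1}` of a graded poset with rank function `rank`,
sending each basis element `x ∈ P_n` to the sum of the elements it covers.
(For `n = 0` this is the zero map on `ℚP_0` in a graded poset, matching `D_0 = 0`.) -/
noncomputable def downMap {P : Type*} [PartialOrder P] (rank : P → ℕ)
    [∀ m : ℕ, Fintype {x : P // rank x = m}] (n : ℕ) :
    ({x : P // rank x = n} → ℚ) →ₗ[ℚ] ({x : P // rank x = n - 1} → ℚ) :=
  Matrix.mulVecLin (fun (z : {x : P // rank x = n - 1}) (x : {x : P // rank x = n}) =>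
    if (z : P) ⋖ (x : P) then 1 else 0)

/-- `P` (a partial order with rank function `rank`, all rank sets finite) is an
`r`-differential poset: `r > 0`, there is a least element `0̂` of rank `0`, the poset is
graded (covers raise rank by exactly one, the rank function is strictly monotone, and every
element of nonzero rank covers something), and `D_{n+1} U_n - U_{n-1} D_n = r·I` on `ℚP_n`
for all `n ≥ 0` (for `n = 0` the relation reads `D_1 U_0 = r·I`, since `D_0 = 0`). -/
structure IsDifferentialPoset {P : Type*} [PartialOrder P] (rank : P → ℕ)
    [∀ m : ℕ, Fintype {x : P // rank x = m}] (r : ℕ) : Prop where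
  r_pos : 0 < r
  exists_bot : ∃ b : P, rank b = 0 ∧ ∀ x : P, b ≤ x
  rank_covBy : ∀ x y : P, x ⋖ y → rank y = rank x + 1
  rank_strictMono : ∀ x y : P, x < y → rank x < rank y
  exists_covBy_of_rank_ne_zero : ∀ x : P, rank x ≠ 0 → ∃ y : P, y ⋖ x
  diff_zero : downMap rank 1 ∘ₗ upMap rank 0 = (r : ℚ) • LinearMap.id
  diff : ∀ n : ℕ,
    LinearMap.comp (M₃ := {x : P // rank x = n + 1} → ℚ)
        (downMap rank (n + 2)) (upMap rank (n + 1))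
      - upMap rank n ∘ₗ downMap rank (n + 1) = (r : ℚ) • LinearMap.id

section Aux
open Classical Matrix

lemma downMap_eq_transpose {P : Type*} [PartialOrder P] (rank : P → ℕ)
    [∀ m : ℕ, Fintype {x : P // rank x = m}] (n : ℕ) (v : {x : P // rank x = n + 1} → ℚ) :
    downMap rank (n + 1) v =
      (fun (y : {x : P // rank x = n + 1}) (x : {x : P // rank x = n}) =>
        if (x : P) ⋖ (y : P) then (1:ℚ) else 0)ᵀ.mulVec v := rfl

lemma upMap_injective {P : Type*} [PartialOrder P] (rank : P → ℕ)
    [∀ m : ℕ, Fintype {x : P // rank x = m}] (r : ℕ)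
    (hP : IsDifferentialPoset rank r) (n : ℕ) :
    Function.Injective (upMap (P := P) rank n) := by
  rw [← LinearMap.ker_eq_bot, LinearMap.ker_eq_bot']
  intro v hv
  set A : Matrix {x : P // rank x = n + 1} {x : P // rank x = n} ℚ :=
    (fun (y : {x : P // rank x = n + 1}) (x : {x : P // rank x = n}) =>
      if (x : P) ⋖ (y : P) then (1:ℚ) else 0) with hA
  have hr : (0:ℚ) < r := by exact_mod_cast hP.r_pos
  cases n with
  | zero =>
    have h := congrFun (congrArg DFunLike.coe hP.diff_zero) v
    simp only [LinearMap.comp_apply, hv, map_zero, LinearMap.smul_apply,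
      LinearMap.id_apply] at h
    have : v = 0 := by
      have := h.symm
      rwa [smul_eq_zero, or_iff_right (ne_of_gt hr)] at this
    exact this
  | succ m =>
    have h := congrFun (congrArg DFunLike.coe (hP.diff m)) v
    simp only [LinearMap.sub_apply, LinearMap.comp_apply, hv, map_zero,
      LinearMap.smul_apply, LinearMap.id_apply, zero_sub] at h
    -- h : -(upMap rank m) ((downMap rank (m+1)) v) = r • v
    have hdot := congrArg (fun w => w ⬝ᵥ v) h
    simp only [neg_dotProduct, smul_dotProduct] at hdot
    have hU : (upMap rank m) ((downMap rank (m + 1)) v) ⬝ᵥ v =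
        (downMap rank (m + 1)) v ⬝ᵥ (downMap rank (m + 1)) v := by
      show (Matrix.mulVec (Matrix.of (fun (y : {x : P // rank x = m + 1}) (x : {x : P // rank x = m}) =>
        if (x : P) ⋖ (y : P) then (1:ℚ) else 0)) ((downMap rank (m + 1)) v)) ⬝ᵥ v = _
      rw [dotProduct_comm, Matrix.dotProduct_mulVec, downMap_eq_transpose]
      exact congrArg (· ⬝ᵥ _) (Matrix.mulVec_transpose _ v).symm
    simp only [smul_eq_mul] at hdot
    have hdot2 : -((downMap rank (m + 1)) v ⬝ᵥ (downMap rank (m + 1)) v) = (r:ℚ) * (v ⬝ᵥ v) := by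
      rw [← hU]; exact hdot
    have h1 : (0:ℚ) ≤ (downMap rank (m + 1)) v ⬝ᵥ (downMap rank (m + 1)) v :=
      Finset.sum_nonneg fun i _ => mul_self_nonneg _
    have h2 : (0:ℚ) ≤ v ⬝ᵥ v := Finset.sum_nonneg fun i _ => mul_self_nonneg _
    have hvv : v ⬝ᵥ v = 0 := by nlinarith [hdot2]
    exact (dotProduct_self_eq_zero).mp hvv

end Aux

/-- Stanley. For any `r`-differential poset, the rank sizes weakly
increase: `p_n ≤ p_{n+1}` for all `n ≥ 0`. -/
theorem rank_sizes_weakly_increase {P : Type*} [PartialOrder P] (rank : P → ℕ)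
    [∀ m : ℕ, Fintype {x : P // rank x = m}] (r : ℕ)
    (hP : IsDifferentialPoset rank r) (n : ℕ) :
    Fintype.card {x : P // rank x = n} ≤ Fintype.card {x : P // rank x = n + 1} := by
  have hinj := upMap_injective rank r hP n
  have := LinearMap.finrank_le_finrank_of_injective hinj
  simpa [Module.finrank_fintype_fun_eq_card] using this
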